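/- The antilinear involution s admits a polar decomposition: there exist a selfadjoint positive-definite ℂ-linear map R : V → V with R ∘ R = C and a conjugate-linear map J : V → V with J ∘ J = id and ⟨Jx, Jy⟩ = ⟨y, x⟩ for all x, y ∈ V, such that s = J ∘ R = R⁻¹ ∘ J; moreover J = s ∘ R⁻¹ and s ∘ R ∘ s = R⁻¹. -/

import Mathlib

open scoped InnerProductSpace
open ComplexConjugate

/-- the antilinear involution `s` admits a polar decomposition: there exist a
selfadjoint positive-definite ℂ-linear `R` with `R ∘ R = C` and a conjugate-linear `J` with
`J ∘ J = id` and `⟨J x, J y⟩ = ⟨y, x⟩`, such that `s = J ∘ R = R⁻¹ ∘ J`; moreover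
`J = s ∘ R⁻¹` (equivalently `J ∘ R = s`, i.e. `R` is bijective and `J` is `s` composed with
the inverse of `R`) and `s ∘ R ∘ s = R⁻¹`. -/
theorem antilinear_involution_polar_decomposition
    {V : Type*} [NormedAddCommGroup V] [InnerProductSpace ℂ V] [FiniteDimensional ℂ V]
    (s : V →ₗ⋆[ℂ] V) (hs : ∀ x : V, s (s x) = x)
    (C : V →ₗ[ℂ] V)
    (hC : ∀ x y : V, (inner ℂ (s x) (s y) : ℂ) = inner ℂ y (C x)) :
    ∃ (R : V →ₗ[ℂ] V) (J : V →ₗ⋆[ℂ] V),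
      R.IsSymmetric ∧
      (∀ x : V, x ≠ 0 → ∃ r : ℝ, ((inner ℂ x (R x) : ℂ) = (r : ℂ)) ∧ 0 < r) ∧
      (∀ x : V, R (R x) = C x) ∧
      Function.Bijective R ∧
      (∀ x : V, J (J x) = x) ∧
      (∀ x y : V, (inner ℂ (J x) (J y) : ℂ) = inner ℂ y x) ∧
      (∀ x : V, s x = J (R x)) ∧
      (∀ x : V, R (s x) = J x) ∧
      (∀ x : V, s (R (s (R x))) = x) ∧
      (∀ x : V, R (s (R (s x))) = x) := by
  have hV : CompleteSpace V := FiniteDimensional.complete ℂ V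
  -- basic facts about s
  have hsinj : Function.Injective s := fun a b h => by
    have := congrArg s h; rwa [hs, hs] at this
  -- C is symmetric
  have hCsymm : ∀ x y : V, ⟪C x, y⟫_ℂ = ⟪x, C y⟫_ℂ := by
    intro x y
    calc ⟪C x, y⟫_ℂ = conj ⟪y, C x⟫_ℂ := by rw [inner_conj_symm]
    _ = conj ⟪s x, s y⟫_ℂ := by rw [hC x y]
    _ = ⟪s y, s x⟫_ℂ := by rw [inner_conj_symm]
    _ = ⟪x, C y⟫_ℂ := hC y x
  have hCself : ∀ x : V, ⟪x, C x⟫_ℂ = ((‖s x‖ : ℂ)) ^ 2 := by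
    intro x; rw [← hC x x]; exact inner_self_eq_norm_sq_to_K _
  have hCinj : Function.Injective C := by
    intro a b h
    rw [← sub_eq_zero] at h ⊢
    rw [← map_sub] at h
    have h2 : ⟪a - b, C (a - b)⟫_ℂ = 0 := by rw [h, inner_zero_right]
    rw [hCself] at h2
    have h3 : ((‖s (a - b)‖ : ℂ)) = 0 := pow_eq_zero_iff two_ne_zero |>.mp h2
    have h4 : s (a - b) = s 0 := by
      rw [map_zero]
      exact norm_eq_zero.mp (by exact_mod_cast h3)
    exact hsinj h4
  set Tc : V →L[ℂ] V := LinearMap.toContinuousLinearMap C with hTcdef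
  have hTca : ∀ x : V, Tc x = C x := fun x => rfl
  have hTcpos : 0 ≤ Tc := by
    rw [ContinuousLinearMap.nonneg_iff_isPositive, ContinuousLinearMap.isPositive_iff_complex]
    intro x
    have h1 : ⟪Tc x, x⟫_ℂ = ((‖s x‖ ^ 2 : ℝ) : ℂ) := by
      rw [hTca]
      calc ⟪C x, x⟫_ℂ = conj ⟪x, C x⟫_ℂ := by rw [inner_conj_symm]
      _ = conj (((‖s x‖ : ℂ)) ^ 2) := by rw [hCself]
      _ = ((‖s x‖ ^ 2 : ℝ) : ℂ) := by push_cast; rw [map_pow, Complex.conj_ofReal]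
    rw [h1]
    constructor <;> simp [← Complex.ofReal_pow, sq_nonneg]
  set Rc : V →L[ℂ] V := CFC.sqrt Tc with hRcdef
  have hRpos : 0 ≤ Rc := CFC.sqrt_nonneg _
  have hRR : Rc * Rc = Tc := CFC.sqrt_mul_sqrt_self Tc hTcpos
  have hRRa : ∀ x : V, Rc (Rc x) = C x := by
    intro x
    have := congrFun (congrArg (fun (f : V →L[ℂ] V) => (f : V → V)) hRR) x
    simpa [ContinuousLinearMap.mul_apply, hTca] using this
  have hRsa : IsSelfAdjoint Rc := IsSelfAdjoint.of_nonneg hRpos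
  have hRsym : ∀ x y : V, ⟪Rc x, y⟫_ℂ = ⟪x, Rc y⟫_ℂ :=
    ContinuousLinearMap.isSelfAdjoint_iff_isSymmetric.mp hRsa
  -- Rc is injective, hence bijective
  have hRinj : Function.Injective Rc := by
    intro a b h
    apply hCinj
    rw [← hRRa, ← hRRa, h]
  have hRbij : Function.Bijective (Rc.toLinearMap) :=
    ⟨hRinj, (LinearMap.injective_iff_surjective).mp hRinj⟩
  set e : V ≃ₗ[ℂ] V := LinearEquiv.ofBijective Rc.toLinearMap hRbij with hedef
  set Rinv : V →L[ℂ] V := LinearMap.toContinuousLinearMap (e.symm : V →ₗ[ℂ] V) with hRinvdef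
  have hRRinv : ∀ x : V, Rc (Rinv x) = x := fun x => e.apply_symm_apply x
  have hRinvR : ∀ x : V, Rinv (Rc x) = x := fun x => e.symm_apply_apply x
  -- positivity facts for Rc (real-valued and nonneg quadratic form)
  have hRq := (ContinuousLinearMap.isPositive_iff_complex Rc).mp
    ((ContinuousLinearMap.nonneg_iff_isPositive Rc).mp hRpos)
  -- D := s ∘ Rc ∘ s is a ℂ-linear map
  set D₀ : V →ₗ[ℂ] V :=
    { toFun := fun x => s (Rc (s x))
      map_add' := by intro a b; simp
      map_smul' := by
        intro c x
        simp only [RingHom.id_apply]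
        rw [LinearMap.map_smulₛₗ, map_smul, LinearMap.map_smulₛₗ]
        simp } with hD₀def
  set D : V →L[ℂ] V := LinearMap.toContinuousLinearMap D₀ with hDdef
  have hDa : ∀ x : V, D x = s (Rc (s x)) := fun x => rfl
  have hDinner : ∀ x : V, ⟪x, D x⟫_ℂ = ⟪Rc (s x), Rc (Rc (s x))⟫_ℂ := by
    intro x
    have h0 : ⟪x, D x⟫_ℂ = ⟪s (s x), s (Rc (s x))⟫_ℂ := by rw [hs, hDa]
    rw [h0, hC (s x) (Rc (s x)), ← hRRa]
  have hDpos : 0 ≤ D := by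
    rw [ContinuousLinearMap.nonneg_iff_isPositive, ContinuousLinearMap.isPositive_iff_complex]
    intro x
    have h1 : ⟪D x, x⟫_ℂ = ⟪Rc (Rc (s x)), Rc (s x)⟫_ℂ := by
      rw [← inner_conj_symm, hDinner, inner_conj_symm]
    rw [h1]
    exact hRq (Rc (s x))
  have hRinvpos : 0 ≤ Rinv := by
    rw [ContinuousLinearMap.nonneg_iff_isPositive, ContinuousLinearMap.isPositive_iff_complex]
    intro x
    have h1 : ⟪Rc (Rinv x), Rinv x⟫_ℂ = ⟪Rinv x, x⟫_ℂ := by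
      rw [hRsym, hRRinv]
    rw [← h1]
    exact hRq (Rinv x)
  -- D ∘ D = Rinv ∘ Rinv (both are inverses of C after applying C)
  have hCA : ∀ x : V, C (s (C (s x))) = x := by
    intro x
    apply ext_inner_right ℂ
    intro y
    have h1 : ⟪x, y⟫_ℂ = ⟪s y, C (s x)⟫_ℂ := by
      rw [← hC (s x) (s y), hs, hs]
    have h2 : C (s x) = s (s (C (s x))) := (hs _).symm
    rw [h2] at h1
    rw [hC y (s (C (s x)))] at h1
    rw [← hCsymm] at h1
    exact h1.symm
  have hDD : D * D = Rinv * Rinv := by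
    ext x
    rw [ContinuousLinearMap.mul_apply, ContinuousLinearMap.mul_apply]
    apply hCinj
    have hl : D (D x) = s (C (s x)) := by
      rw [hDa, hDa, hs, hRRa]
    rw [hl, hCA]
    rw [← hRRa, hRRinv, hRRinv]
  have hDeq : D = Rinv := by
    have h1 : CFC.sqrt (Rinv * Rinv) = Rinv := CFC.sqrt_unique rfl hRinvpos
    have h2 : CFC.sqrt (Rinv * Rinv) = D := CFC.sqrt_unique hDD hDpos
    rw [← h1, h2]
  have key : ∀ x : V, s (Rc (s x)) = Rinv x := by
    intro x; rw [← hDa, hDeq]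
  -- the conjugate-linear map J := Rc ∘ s
  set J : V →ₗ⋆[ℂ] V :=
    { toFun := fun x => Rc (s x)
      map_add' := by intro a b; simp
      map_smul' := by
        intro c x
        show Rc (s (c • x)) = (starRingEnd ℂ) c • Rc (s x)
        rw [LinearMap.map_smulₛₗ, map_smul] } with hJdef
  have hJa : ∀ x : V, J x = Rc (s x) := fun x => rfl
  have hJ' : ∀ x : V, J x = s (Rinv x) := by
    intro x
    rw [← key x, hs, hJa]
  refine ⟨Rc.toLinearMap, J, ?_, ?_, hRRa, hRbij, ?_, ?_, ?_, fun x => rfl, ?_, ?_⟩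
  · exact ContinuousLinearMap.isSelfAdjoint_iff_isSymmetric.mp hRsa
  · -- positive definiteness via Q = sqrt Rc
    intro x hx
    set Q : V →L[ℂ] V := CFC.sqrt Rc with hQdef
    have hQpos : 0 ≤ Q := CFC.sqrt_nonneg _
    have hQQ : Q * Q = Rc := CFC.sqrt_mul_sqrt_self Rc hRpos
    have hQQa : ∀ y : V, Q (Q y) = Rc y := by
      intro y
      have := congrFun (congrArg (fun (f : V →L[ℂ] V) => (f : V → V)) hQQ) y
      simpa [ContinuousLinearMap.mul_apply] using this
    have hQsym : ∀ a b : V, ⟪Q a, b⟫_ℂ = ⟪a, Q b⟫_ℂ :=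
      ContinuousLinearMap.isSelfAdjoint_iff_isSymmetric.mp (IsSelfAdjoint.of_nonneg hQpos)
    have hQx : Q x ≠ 0 := by
      intro h
      apply hx
      apply hRinj
      rw [← hQQa, h, map_zero, map_zero]
    refine ⟨‖Q x‖ ^ 2, ?_, pow_pos (norm_pos_iff.mpr hQx) 2⟩
    have : (inner ℂ x (Rc.toLinearMap x) : ℂ) = ⟪Q x, Q x⟫_ℂ := by
      rw [hQsym]
      congr 1
      exact (hQQa x).symm
    rw [this, inner_self_eq_norm_sq_to_K]
    norm_cast
  · -- J ∘ J = id
    intro x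
    show Rc (s (Rc (s x))) = x
    rw [key, hRRinv]
  · -- ⟪J x, J y⟫ = ⟪y, x⟫
    intro x y
    rw [hJ' x, hJ' y]
    rw [hC (Rinv x) (Rinv y)]
    rw [← hRRa, hRRinv, ← hRsym, hRRinv]
  · -- s x = J (R x)
    intro x
    show s x = Rc (s (Rc x))
    have := congrArg s (key (Rc x))
    rw [hs, hRinvR] at this
    exact this.symm
  · -- s (R (s (R x))) = x
    intro x
    show s (Rc (s (Rc x))) = x
    rw [key, hRinvR]
  · -- R (s (R (s x))) = x
    intro x
    show Rc (s (Rc (s x))) = x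
    rw [key, hRRinv]
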